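/- Let h > 0 satisfy Ah ≤ a. Then for every u ∈ ℝ, ∫_0^T L_h(t−u)² dt ≤ ‖K'‖₂² (T + 4a) / (2 a h). -/

import Mathlib

open MeasureTheory Real

lemma deriv_zero_right {K : ℝ → ℝ} (hK : ContDiff ℝ 1 K) {A : ℝ}
    (h0 : ∀ x, A < x → K x = 0) : deriv K A = 0 := by
  have hKA : K A = 0 := by
    have h1 : Filter.Tendsto K (nhdsWithin A (Set.Ioi A)) (nhds (K A)) :=
      (hK.continuous.continuousAt).continuousWithinAt
    have h2 : Filter.Tendsto K (nhdsWithin A (Set.Ioi A)) (nhds 0) := by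
      apply Filter.Tendsto.congr' _ tendsto_const_nhds
      filter_upwards [self_mem_nhdsWithin] with x hx
      exact (h0 x hx).symm
    exact tendsto_nhds_unique h1 h2
  have hIci : ∀ y ∈ Set.Ici A, (fun _ => (0:ℝ)) y = K y := by
    intro y hy
    rcases eq_or_lt_of_le (Set.mem_Ici.mp hy) with heq | hlt
    · simp [← heq, hKA]
    · simp [h0 y hlt]
  have hd1 : HasDerivWithinAt K (deriv K A) (Set.Ici A) A :=
    ((hK.differentiable one_ne_zero A).hasDerivAt).hasDerivWithinAt
  have hd2 : HasDerivWithinAt K 0 (Set.Ici A) A :=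
    (hasDerivWithinAt_const A (Set.Ici A) (0:ℝ)).congr (fun y hy => (hIci y hy).symm) hKA
  exact (uniqueDiffOn_Ici A A Set.self_mem_Ici).eq_deriv _ hd1 hd2

lemma deriv_zero_left {K : ℝ → ℝ} (hK : ContDiff ℝ 1 K) {A : ℝ}
    (h0 : ∀ x, x < A → K x = 0) : deriv K A = 0 := by
  have hKA : K A = 0 := by
    have h1 : Filter.Tendsto K (nhdsWithin A (Set.Iio A)) (nhds (K A)) :=
      (hK.continuous.continuousAt).continuousWithinAt
    have h2 : Filter.Tendsto K (nhdsWithin A (Set.Iio A)) (nhds 0) := by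
      apply Filter.Tendsto.congr' _ tendsto_const_nhds
      filter_upwards [self_mem_nhdsWithin] with x hx
      exact (h0 x hx).symm
    exact tendsto_nhds_unique h1 h2
  have hIic : ∀ y ∈ Set.Iic A, (fun _ => (0:ℝ)) y = K y := by
    intro y hy
    rcases eq_or_lt_of_le (Set.mem_Iic.mp hy) with heq | hlt
    · simp [heq, hKA]
    · simp [h0 y hlt]
  have hd1 : HasDerivWithinAt K (deriv K A) (Set.Iic A) A :=
    ((hK.differentiable one_ne_zero A).hasDerivAt).hasDerivWithinAt
  have hd2 : HasDerivWithinAt K 0 (Set.Iic A) A :=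
    (hasDerivWithinAt_const A (Set.Iic A) (0:ℝ)).congr (fun y hy => (hIic y hy).symm) hKA
  exact (uniqueDiffOn_Iic A A Set.self_mem_Iic).eq_deriv _ hd1 hd2

/-- For `h > 0` with `Ah ≤ a` and every `u ∈ ℝ`,
`∫_0^T L_h(t−u)² dt ≤ ‖K'‖₂² (T + 4a) / (2ah)`. -/
theorem stmt_8 (a A T : ℝ) (ha : 0 < a) (hA : 0 < A) (hT : 0 < T)
    (K : ℝ → ℝ) (hK : ContDiff ℝ 1 K)
    (hKsupp : Function.support K ⊆ Set.Icc (-A) A)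
    (h : ℝ) (hh : 0 < h) (hha : A * h ≤ a)
    (s : ℤ → ℝ) (hs : ∀ k, s k = if 0 ≤ k then 1 else -1)
    (L : ℝ → ℝ)
    (hL : ∀ x, L x = h⁻¹ * ∑' k : ℤ, s k * deriv K ((x - (2 * (k : ℝ) + 1) * a) / h)) :
    ∀ u : ℝ, (∫ t in (0 : ℝ)..T, (L (t - u)) ^ 2)
      ≤ (∫ x, (deriv K x) ^ 2) * (T + 4 * a) / (2 * a * h) := by
  intro u
  have hK0 : ∀ x, x ∉ Set.Icc (-A) A → K x = 0 := by
    intro x hx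
    by_contra hne
    exact hx (hKsupp hne)
  have hK'cont : Continuous (deriv K) := hK.continuous_deriv le_rfl
  -- deriv K vanishes outside the open interval (-A, A)
  have hK'supp : ∀ y, deriv K y ≠ 0 → -A < y ∧ y < A := by
    intro y hy
    have hmem : y ∈ Set.Icc (-A) A := by
      have h1 : y ∈ tsupport K := support_deriv_subset hy
      exact (closure_minimal hKsupp isClosed_Icc) h1
    constructor
    · rcases eq_or_lt_of_le hmem.1 with heq | hlt
      · exfalso
        apply hy
        rw [← heq]
        exact deriv_zero_left hK (fun x hx => hK0 x (by
          simp only [Set.mem_Icc, not_and, not_le]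
          intro h'; linarith))
      · exact hlt
    · rcases eq_or_lt_of_le hmem.2 with heq | hlt
      · exfalso
        apply hy
        rw [heq]
        exact deriv_zero_right hK (fun x hx => hK0 x (by
          simp only [Set.mem_Icc, not_and, not_le]
          intro h'; linarith))
      · exact hlt
  set c : ℤ → ℝ := fun k => (2 * (k : ℝ) + 1) * a with hc
  set f : ℤ → ℝ → ℝ := fun k x => deriv K ((x - c k) / h) with hf
  -- support of each f k
  have hsupp2 : ∀ k x, f k x ≠ 0 → 2 * (k : ℝ) * a < x ∧ x < 2 * ((k : ℝ) + 1) * a := by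
    intro k x hx
    obtain ⟨h1, h2⟩ := hK'supp _ hx
    have hck : c k = 2 * (k:ℝ) * a + a := by rw [hc]; ring
    rw [neg_lt, ← neg_div] at h1
    rw [div_lt_iff₀ hh] at *
    constructor
    · nlinarith
    · nlinarith
  -- uniqueness of the contributing index
  have huniq : ∀ k x, f k x ≠ 0 → k = ⌊x / (2 * a)⌋ := by
    intro k x hx
    obtain ⟨h1, h2⟩ := hsupp2 k x hx
    have h2a : (0:ℝ) < 2 * a := by linarith
    have hle : (k : ℝ) ≤ x / (2 * a) := by
      rw [le_div_iff₀ h2a]; nlinarith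
    have hlt : x / (2 * a) < (k : ℝ) + 1 := by
      rw [div_lt_iff₀ h2a]; nlinarith
    have hk1 : k ≤ ⌊x / (2 * a)⌋ := Int.le_floor.mpr hle
    have hk2 : ⌊x / (2 * a)⌋ ≤ k := by
      have := Int.floor_le (x / (2 * a))
      have : (⌊x / (2 * a)⌋ : ℝ) < (k : ℝ) + 1 := lt_of_le_of_lt this hlt
      exact_mod_cast Int.lt_add_one_iff.mp (by exact_mod_cast this)
    omega
  -- the tsum collapses to a single term
  have hLx : ∀ x, L x = h⁻¹ * (s ⌊x / (2 * a)⌋ * f ⌊x / (2 * a)⌋ x) := by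
    intro x
    rw [hL x]
    congr 1
    apply tsum_eq_single
    intro k hk
    have : f k x = 0 := by
      by_contra hne
      exact hk (huniq k x hne)
    simp only [hf] at this
    rw [this, mul_zero]
  have hsq : ∀ m : ℤ, (s m) ^ 2 = 1 := by
    intro m
    rw [hs m]
    split_ifs <;> norm_num
  have hLsq : ∀ x, (L x) ^ 2 = h⁻¹ ^ 2 * (f ⌊x / (2 * a)⌋ x) ^ 2 := by
    intro x
    rw [hLx x, mul_pow, mul_pow, hsq, one_mul]
  -- the finite index set
  set K0 : ℤ := ⌊(-u) / (2 * a)⌋ with hK0def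
  set K1 : ℤ := ⌊(T - u) / (2 * a)⌋ with hK1def
  set F : Finset ℤ := Finset.Icc K0 K1 with hF
  have h2a : (0:ℝ) < 2 * a := by linarith
  -- pointwise identity on the interval
  have heq : ∀ t ∈ Set.uIcc (0:ℝ) T,
      (L (t - u)) ^ 2 = h⁻¹ ^ 2 * ∑ k ∈ F, (f k (t - u)) ^ 2 := by
    intro t ht
    rw [Set.uIcc_of_le hT.le, Set.mem_Icc] at ht
    set x := t - u with hxdef
    set m : ℤ := ⌊x / (2 * a)⌋ with hm
    rw [hLsq x]
    congr 1
    by_cases hfm : f m x = 0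
    · rw [hfm, zero_pow two_ne_zero, eq_comm]
      apply Finset.sum_eq_zero
      intro k hk
      have : f k x = 0 := by
        by_contra hne
        rw [huniq k x hne, ← hm] at hne
        exact hne hfm
      rw [this]; ring
    · have hmF : m ∈ F := by
        obtain ⟨h1, h2⟩ := hsupp2 m x hfm
        rw [hF, Finset.mem_Icc]
        constructor
        · -- K0 ≤ m : from -u < 2(m+1)a
          have hxu : -u ≤ x := by rw [hxdef]; linarith [ht.1]
          have : -u < 2 * ((m:ℝ) + 1) * a := lt_of_le_of_lt hxu h2
          have hlt : (-u) / (2 * a) < (m:ℝ) + 1 := by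
            rw [div_lt_iff₀ h2a]; nlinarith
          have : (K0 : ℝ) < (m : ℝ) + 1 := lt_of_le_of_lt (Int.floor_le _) hlt
          exact_mod_cast Int.lt_add_one_iff.mp (by exact_mod_cast this)
        · -- m ≤ K1 : from 2ma < T - u
          have hxT : x ≤ T - u := by rw [hxdef]; linarith [ht.2]
          have : 2 * (m:ℝ) * a < T - u := lt_of_lt_of_le h1 hxT
          apply Int.le_floor.mpr
          rw [le_div_iff₀ h2a]; nlinarith
      rw [eq_comm]
      apply Finset.sum_eq_single_of_mem m hmF
      intro k _ hk
      have : f k x = 0 := by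
        by_contra hne
        exact hk (huniq k x hne)
      rw [this]; ring
  -- integrability facts
  have hKcs : HasCompactSupport K :=
    HasCompactSupport.intro isCompact_Icc hK0
  have hK'cs : HasCompactSupport (deriv K) := hKcs.deriv
  have hgcs : HasCompactSupport (fun y => (deriv K y) ^ 2) := by
    have : (fun y => (deriv K y) ^ 2) = (fun z : ℝ => z ^ 2) ∘ deriv K := rfl
    rw [this]
    exact hK'cs.comp_left (by norm_num)
  have hgcont : Continuous (fun y => (deriv K y) ^ 2) := hK'cont.pow 2
  have hgint : Integrable (fun y => (deriv K y) ^ 2) :=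
    hgcont.integrable_of_hasCompactSupport hgcs
  set I : ℝ := ∫ x, (deriv K x) ^ 2 with hI
  have hInn : 0 ≤ I := integral_nonneg (fun x => sq_nonneg _)
  -- per-term bound
  have hterm : ∀ k : ℤ, (∫ t in (0:ℝ)..T, (f k (t - u)) ^ 2) ≤ h * I := by
    intro k
    have hrw : ∀ t : ℝ, (f k (t - u)) ^ 2
        = (fun y => (deriv K (y / h)) ^ 2) (t - (u + c k)) := by
      intro t
      simp only [hf]
      ring_nf
    have hint_div : Integrable (fun y => (deriv K (y / h)) ^ 2) :=
      hgint.comp_div hh.ne'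
    have hint : Integrable (fun t => (f k (t - u)) ^ 2) := by
      have := hint_div.comp_sub_right (u + c k)
      apply this.congr
      filter_upwards with t
      exact (hrw t).symm
    have hfull : (∫ t : ℝ, (f k (t - u)) ^ 2) = h * I := by
      have h1 : (∫ t : ℝ, (f k (t - u)) ^ 2)
          = ∫ t : ℝ, (fun y => (deriv K (y / h)) ^ 2) (t - (u + c k)) := by
        congr 1
        ext t
        exact hrw t
      rw [h1, integral_sub_right_eq_self (fun y => (deriv K (y / h)) ^ 2) (u + c k),
        MeasureTheory.Measure.integral_comp_div (fun y => (deriv K y) ^ 2) h,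
        abs_of_pos hh, smul_eq_mul, hI]
    calc (∫ t in (0:ℝ)..T, (f k (t - u)) ^ 2)
        = ∫ t in Set.Ioc (0:ℝ) T, (f k (t - u)) ^ 2 := by
          rw [intervalIntegral.integral_of_le hT.le]
      _ ≤ ∫ t : ℝ, (f k (t - u)) ^ 2 :=
          setIntegral_le_integral hint (Filter.Eventually.of_forall fun t => sq_nonneg _)
      _ = h * I := hfull
  -- cardinality bound
  have hK01 : K0 ≤ K1 := by
    apply Int.floor_le_floor
    rw [div_le_div_iff₀ h2a h2a]
    nlinarith
  have hcardval : ((F.card : ℝ)) = (K1 : ℝ) - K0 + 1 := by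
    have h2 : ((Finset.Icc K0 K1).card : ℝ) = (K1 : ℝ) + 1 - K0 := by
      exact_mod_cast Int.card_Icc_of_le _ _ (show K0 ≤ K1 + 1 by omega)
    rw [hF, h2]
    ring
  have hcard : ((F.card : ℝ)) ≤ (T + 4 * a) / (2 * a) := by
    rw [hcardval]
    have h1 : (K1 : ℝ) ≤ (T - u) / (2 * a) := Int.floor_le _
    have h2 : (-u) / (2 * a) - 1 < (K0 : ℝ) := Int.sub_one_lt_floor _
    have h3 : (T - u) / (2 * a) + u / (2 * a) = T / (2 * a) := by
      field_simp
      ring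
    have h4 : (-u) / (2 * a) = -(u / (2 * a)) := by ring
    have hTa : (T + 4 * a) / (2 * a) = T / (2 * a) + 2 := by
      field_simp; ring
    rw [hTa]
    linarith [h1, h2, h3, h4]
  -- assemble
  have hmaj : (∫ t in (0:ℝ)..T, (L (t - u)) ^ 2)
      = h⁻¹ ^ 2 * ∑ k ∈ F, ∫ t in (0:ℝ)..T, (f k (t - u)) ^ 2 := by
    rw [intervalIntegral.integral_congr heq, intervalIntegral.integral_const_mul,
      intervalIntegral.integral_finset_sum]
    intro k _
    apply Continuous.intervalIntegrable
    have : Continuous (fun t : ℝ => (t - u - c k) / h) := by fun_prop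
    exact (hK'cont.comp this).pow 2
  rw [hmaj]
  have hsumle : ∑ k ∈ F, (∫ t in (0:ℝ)..T, (f k (t - u)) ^ 2)
      ≤ (F.card : ℝ) * (h * I) := by
    calc ∑ k ∈ F, (∫ t in (0:ℝ)..T, (f k (t - u)) ^ 2)
        ≤ ∑ _k ∈ F, (h * I) := Finset.sum_le_sum (fun k _ => hterm k)
      _ = (F.card : ℝ) * (h * I) := by
          rw [Finset.sum_const, nsmul_eq_mul]
  have hhI : 0 ≤ h * I := mul_nonneg hh.le hInn
  calc h⁻¹ ^ 2 * ∑ k ∈ F, (∫ t in (0:ℝ)..T, (f k (t - u)) ^ 2)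
      ≤ h⁻¹ ^ 2 * ((F.card : ℝ) * (h * I)) := by
        apply mul_le_mul_of_nonneg_left hsumle
        positivity
    _ ≤ h⁻¹ ^ 2 * ((T + 4 * a) / (2 * a) * (h * I)) := by
        apply mul_le_mul_of_nonneg_left _ (by positivity)
        exact mul_le_mul_of_nonneg_right hcard hhI
    _ = I * (T + 4 * a) / (2 * a * h) := by
        field_simp
    _ = (∫ x, (deriv K x) ^ 2) * (T + 4 * a) / (2 * a * h) := by rw [hI]
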